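/- Let K be a field equipped with a nonarchimedean absolute value |·| (so |x + y| ≤ max(|x|, |y|)), let V be a finite-dimensional K-vector space, and let 0 ≤ ε < 1. Let s be an invertible K-linear endomorphism of V whose eigenspaces span V, and let y, y' be K-linear endomorphisms of V, each commuting with s and each with eigenspaces spanning V. Assume every eigenvalue α of y and every eigenvalue α' of y' satisfies |α − 1| ≤ ε and |α' − 1| ≤ ε, and that any two distinct eigenvalues λ ≠ λ' of s satisfy |λ·(λ')⁻¹ − 1| > ε. If g is an invertible K-linear endomorphism of V such that s ∘ y' ∘ g = g ∘ s ∘ y, then g ∘ s = s ∘ g. -/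

import Mathlib

open Module.End Polynomial in
private lemma stmt3_aux_isSemisimple {K V : Type*} [Field K] [AddCommGroup V] [Module K V]
    [FiniteDimensional K V] (f : Module.End K V)
    (h : (⨆ μ : K, f.eigenspace μ) = ⊤) : f.IsSemisimple := by
  classical
  set S : Finset K := f.finite_hasEigenvalue.toFinset with hS
  refine Module.End.isSemisimple_of_squarefree_aeval_eq_zero
    (p := ∏ μ ∈ S, (X - C μ)) ?_ ?_
  · exact ((Polynomial.separable_prod_X_sub_C_iff' (f := id)).mpr
      (fun a _ b _ hab => hab)).squarefree
  · rw [← LinearMap.ker_eq_top, ← top_le_iff, ← h]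
    refine iSup_le fun μ => fun x hx => ?_
    simp only [LinearMap.mem_ker]
    by_cases hμ : f.HasEigenvalue μ
    · have hmem : μ ∈ S := f.finite_hasEigenvalue.mem_toFinset.mpr hμ
      have hx' : f x = μ • x := Module.End.mem_eigenspace_iff.mp hx
      have hx0 : (aeval f) (X - C μ) x = 0 := by
        simp [Module.algebraMap_end_apply, hx']
      rw [← Finset.mul_prod_erase _ _ hmem, mul_comm (X - C μ), map_mul,
        Module.End.mul_apply, hx0, map_zero]
    · rw [Module.End.hasEigenvalue_iff, not_not] at hμ
      rw [hμ] at hx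
      rw [(Submodule.mem_bot K).mp hx, map_zero]

private lemma stmt3_aux_maxGen {K V : Type*} [Field K] [AddCommGroup V] [Module K V]
    [FiniteDimensional K V] (f : Module.End K V)
    (h : (⨆ μ : K, f.eigenspace μ) = ⊤) (μ : K) :
    f.maxGenEigenspace μ = f.eigenspace μ :=
  ((stmt3_aux_isSemisimple f h).isFinitelySemisimple).maxGenEigenspace_eq_eigenspace μ

theorem stmt_3 {K V : Type*} [Field K] [AddCommGroup V] [Module K V]
    [FiniteDimensional K V]
    (v : AbsoluteValue K ℝ)
    (hna : ∀ x y : K, v (x + y) ≤ max (v x) (v y))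
    (ε : ℝ) (hε0 : 0 ≤ ε) (hε1 : ε < 1)
    (s y y' g : Module.End K V) (hs : IsUnit s) (hg : IsUnit g)
    (hspan_s : (⨆ μ : K, s.eigenspace μ) = ⊤)
    (hspan_y : (⨆ μ : K, y.eigenspace μ) = ⊤)
    (hspan_y' : (⨆ μ : K, y'.eigenspace μ) = ⊤)
    (hcy : Commute s y) (hcy' : Commute s y')
    (hy : ∀ α : K, y.HasEigenvalue α → v (α - 1) ≤ ε)
    (hy' : ∀ α : K, y'.HasEigenvalue α → v (α - 1) ≤ ε)
    (hsep : ∀ l₁ l₂ : K, s.HasEigenvalue l₁ → s.HasEigenvalue l₂ → l₁ ≠ l₂ →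
      ε < v (l₁ * l₂⁻¹ - 1))
    (hconj : s * y' * g = g * (s * y)) :
    g * s = s * g := by
  classical
  -- |α| = 1 for eigenvalues close to 1
  have habs : ∀ α : K, v (α - 1) ≤ ε → v α = 1 := by
    intro α hα
    have h1 : v α ≤ 1 := by
      have h := hna (α - 1) 1
      rw [sub_add_cancel, v.map_one] at h
      exact h.trans (max_le (hα.trans hε1.le) le_rfl)
    have h2 : (1 : ℝ) ≤ v α := by
      by_contra hlt
      push_neg at hlt
      have h3 : v 1 ≤ max (v (1 - α)) (v α) := by
        simpa using hna (1 - α) α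
      rw [v.map_one] at h3
      have h4 : v (1 - α) ≤ ε := by rw [v.map_sub]; exact hα
      have : max (v (1 - α)) (v α) < 1 := max_lt (lt_of_le_of_lt h4 hε1) hlt
      linarith
    linarith
  -- key step: g maps joint eigenvectors of (s, y) into the same s-eigenspace
  have key : ∀ (l a : K) (w : V), w ∈ s.eigenspace l → w ∈ y.eigenspace a →
      g w ∈ s.eigenspace l := by
    intro l a w hwl hwa
    rcases eq_or_ne w 0 with rfl | hw0
    · simp
    have hwl' : s w = l • w := Module.End.mem_eigenspace_iff.mp hwl
    have hwa' : y w = a • w := Module.End.mem_eigenspace_iff.mp hwa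
    have hl : s.HasEigenvalue l := Module.End.hasEigenvalue_of_hasEigenvector ⟨hwl, hw0⟩
    have ha : y.HasEigenvalue a := Module.End.hasEigenvalue_of_hasEigenvector ⟨hwa, hw0⟩
    have hva : v a = 1 := habs a (hy a ha)
    set T : Module.End K V := s * y' - (l * a) • 1 with hT
    -- T kills g w
    have hTg : T (g w) = 0 := by
      have h1 : (s * y' * g) w = (g * (s * y)) w := by rw [hconj]
      simp only [Module.End.mul_apply] at h1
      have h2 : g (s (y w)) = (l * a) • g w := by
        rw [hwa', map_smul, hwl', map_smul, map_smul, smul_smul, mul_comm a l]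
      simp only [hT, LinearMap.sub_apply, LinearMap.smul_apply, Module.End.one_apply,
        Module.End.mul_apply, h1, h2, sub_self]
    -- y' maps each s-eigenspace to itself
    have hy'maps : ∀ (μ : K) (u : V), u ∈ s.eigenspace μ → y' u ∈ s.eigenspace μ := by
      intro μ u hu
      rw [Module.End.mem_eigenspace_iff] at hu ⊢
      have hc := LinearMap.congr_fun (hcy' : s * y' = y' * s) u
      simp only [Module.End.mul_apply] at hc
      rw [hc, hu, map_smul]
    -- T maps each s-eigenspace to itself
    have hTmaps : ∀ (μ : K) (u : V), u ∈ s.eigenspace μ → T u ∈ s.eigenspace μ := by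
      intro μ u hu
      have h1 : y' u ∈ s.eigenspace μ := hy'maps μ u hu
      have h2 : s (y' u) ∈ s.eigenspace μ := by
        rw [Module.End.mem_eigenspace_iff] at h1 ⊢
        rw [h1, map_smul, h1]
      simp only [hT, LinearMap.sub_apply, LinearMap.smul_apply, Module.End.one_apply,
        Module.End.mul_apply]
      exact Submodule.sub_mem _ h2 (Submodule.smul_mem _ _ hu)
    -- T is injective on each s-eigenspace with μ ≠ l
    have hTinj : ∀ (μ : K), μ ≠ l → ∀ (u : V), u ∈ s.eigenspace μ → T u = 0 → u = 0 := by
      intro μ hμl u hu hTu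
      by_contra hu0
      have hμ : s.HasEigenvalue μ := Module.End.hasEigenvalue_of_hasEigenvector ⟨hu, hu0⟩
      have hμ0 : μ ≠ 0 := by
        rintro rfl
        have hsu : s u = 0 := by
          have := Module.End.mem_eigenspace_iff.mp hu
          simpa using this
        have hone : ((hs.unit⁻¹ : (Module.End K V)ˣ) : Module.End K V) * s = 1 := by
          have h := hs.unit.inv_mul
          rwa [hs.unit_spec] at h
        have := LinearMap.congr_fun hone u
        rw [Module.End.mul_apply, hsu, map_zero, Module.End.one_apply] at this
        exact hu0 this.symm
      have ha0 : a ≠ 0 := by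
        rintro rfl
        rw [v.map_zero] at hva
        exact zero_ne_one hva
      have h1 : s (y' u) = (l * a) • u := by
        have h := hTu
        simp only [hT, LinearMap.sub_apply, LinearMap.smul_apply, Module.End.one_apply,
          Module.End.mul_apply, sub_eq_zero] at h
        exact h
      have h2 : s (y' u) = μ • y' u := Module.End.mem_eigenspace_iff.mp (hy'maps μ u hu)
      have h3 : y' u = (μ⁻¹ * (l * a)) • u := by
        have hμu : μ • y' u = (l * a) • u := by rw [← h2, h1]
        have := congrArg (fun z => μ⁻¹ • z) hμu
        simpa [smul_smul, inv_mul_cancel₀ hμ0] using this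
      have ha' : y'.HasEigenvalue (μ⁻¹ * (l * a)) :=
        Module.End.hasEigenvalue_of_hasEigenvector ⟨Module.End.mem_eigenspace_iff.mpr h3, hu0⟩
      have hva' := hy' _ ha'
      have hsep' := hsep l μ hl hμ hμl.symm
      have hkey : v (l * μ⁻¹ - 1) ≤ ε := by
        have heq : (l * μ⁻¹ - 1) * a = (μ⁻¹ * (l * a) - 1) + (1 - a) := by
          field_simp
          ring
        have hv1 : v ((l * μ⁻¹ - 1) * a) = v (l * μ⁻¹ - 1) := by
          rw [v.map_mul, hva, mul_one]
        rw [← hv1, heq]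
        refine (hna _ _).trans (max_le hva' ?_)
        rw [v.map_sub]
        exact hy a ha
      linarith
    -- the complementary subspace spanned by the other eigenspaces of s
    set bigSup : Submodule K V := ⨆ (μ : K) (_ : μ ≠ l), s.eigenspace μ with hbig
    have hbig_maps : ∀ u ∈ bigSup, T u ∈ bigSup := by
      intro u hu
      have hle : bigSup ≤ Submodule.comap T bigSup := by
        refine iSup_le fun μ => iSup_le fun hμ => fun x hx => ?_
        exact Submodule.mem_comap.mpr
          (Submodule.mem_iSup_of_mem μ (Submodule.mem_iSup_of_mem hμ (hTmaps μ x hx)))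
      exact hle hu
    have hmap_eig : ∀ (μ : K), μ ≠ l → Submodule.map T (s.eigenspace μ) = s.eigenspace μ := by
      intro μ hμl
      have hmt : Set.MapsTo T (s.eigenspace μ) (s.eigenspace μ) := fun x hx => hTmaps μ x hx
      have hinj : Function.Injective (T.restrict hmt) := by
        rw [← LinearMap.ker_eq_bot, eq_bot_iff]
        rintro ⟨x, hx⟩ hker
        have hx0 : T x = 0 := congrArg Subtype.val hker
        exact (Submodule.mem_bot _).mpr (Subtype.ext (hTinj μ hμl x hx hx0))
      have hsurj : Function.Surjective (T.restrict hmt) :=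
        (LinearMap.injective_iff_surjective).mp hinj
      apply le_antisymm
      · rintro _ ⟨x, hx, rfl⟩
        exact hTmaps μ x hx
      · intro x hx
        obtain ⟨⟨u, hu⟩, h⟩ := hsurj ⟨x, hx⟩
        exact ⟨u, hu, congrArg Subtype.val h⟩
    have hmap_big : Submodule.map T bigSup = bigSup := by
      rw [hbig, Submodule.map_iSup]
      refine iSup_congr fun μ => ?_
      rw [Submodule.map_iSup]
      refine iSup_congr fun hμ => hmap_eig μ hμ
    have hTbig_inj : ∀ u ∈ bigSup, T u = 0 → u = 0 := by
      intro u hu hTu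
      have hmt : Set.MapsTo T bigSup bigSup := fun x hx => hbig_maps x hx
      have hsurj : Function.Surjective (T.restrict hmt) := by
        rintro ⟨x, hx⟩
        rw [← hmap_big] at hx
        obtain ⟨u', hu', h⟩ := hx
        exact ⟨⟨u', hu'⟩, Subtype.ext h⟩
      have hinj : Function.Injective (T.restrict hmt) :=
        (LinearMap.injective_iff_surjective).mpr hsurj
      have h0 : T.restrict hmt ⟨u, hu⟩ = T.restrict hmt 0 := by
        apply Subtype.ext; show T u = _
        simpa [LinearMap.restrict_apply] using hTu
      have := hinj h0
      simpa using congrArg Subtype.val this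
    -- decompose g w
    have htop : (⊤ : Submodule K V) ≤ s.eigenspace l ⊔ bigSup := by
      rw [← hspan_s]
      refine iSup_le fun μ => ?_
      by_cases hμ : μ = l
      · subst hμ; exact le_sup_left
      · exact le_sup_of_le_right (le_iSup_of_le μ (le_iSup_of_le hμ le_rfl))
    obtain ⟨p, hp, q, hq, hpq⟩ := Submodule.mem_sup.mp (htop (Submodule.mem_top (x := g w)))
    have hdisj : Disjoint (s.eigenspace l) bigSup := s.eigenspaces_iSupIndep l
    have hTq : T q = 0 := by
      have h0 : T p + T q = 0 := by rw [← map_add, hpq, hTg]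
      have hTp : T p ∈ s.eigenspace l := hTmaps l p hp
      have hTq' : T q ∈ bigSup := hbig_maps q hq
      have hTq_eig : T q ∈ s.eigenspace l := by
        have hEq : T q = - T p := by
          rw [eq_neg_iff_add_eq_zero, add_comm]
          exact h0
        rw [hEq]
        exact neg_mem hTp
      exact (Submodule.mem_bot K).mp (hdisj.le_bot (Submodule.mem_inf.mpr ⟨hTq_eig, hTq'⟩))
    have hq0 : q = 0 := hTbig_inj q hq hTq
    rw [← hpq, hq0, add_zero]
    exact hp
  -- simultaneous diagonalization of s and y
  have hms := stmt3_aux_maxGen s hspan_s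
  have hmy := stmt3_aux_maxGen y hspan_y
  set f : Bool → Module.End K V := fun b => if b then s else y with hf
  have hsim : ⨆ χ : Bool → K, ⨅ i, (f i).maxGenEigenspace (χ i) = ⊤ := by
    apply Module.End.iSup_iInf_maxGenEigenspace_eq_top_of_iSup_maxGenEigenspace_eq_top_of_commute
    · intro i j hij
      cases i <;> cases j
      · exact absurd rfl hij
      · simpa [hf] using hcy.symm
      · simpa [hf] using hcy
      · exact absurd rfl hij
    · intro i
      cases i
      · simp only [hf, Bool.false_eq_true, if_false]
        simp_rw [hmy]
        exact hspan_y
      · simp only [hf, if_true]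
        simp_rw [hms]
        exact hspan_s
  have hker : (⊤ : Submodule K V) ≤ LinearMap.ker (g * s - s * g) := by
    rw [← hsim]
    refine iSup_le fun χ => fun x hx => ?_
    have hxs : x ∈ s.eigenspace (χ true) := by
      have h := (Submodule.mem_iInf _).mp hx true
      simpa [hf, hms] using h
    have hxy : x ∈ y.eigenspace (χ false) := by
      have h := (Submodule.mem_iInf _).mp hx false
      simpa [hf, hmy] using h
    have hgx := key (χ true) (χ false) x hxs hxy
    simp only [LinearMap.mem_ker, LinearMap.sub_apply, Module.End.mul_apply]
    rw [Module.End.mem_eigenspace_iff.mp hxs, map_smul,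
      Module.End.mem_eigenspace_iff.mp hgx, sub_self]
  have hz : g * s - s * g = 0 := LinearMap.ker_eq_top.mp (top_le_iff.mp hker)
  exact sub_eq_zero.mp hz
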